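/- For n ≥ 1, let H_n be the real symmetric matrix indexed by the 2^n vertices x : Fin n → ZMod 2 of the n-dimensional hypercube, with H_n(x, y) = 1 if x and y differ in exactly one coordinate (Hamming distance 1) and H_n(x, y) = 0 otherwise. Let f(x) ∈ {0,…,n} be the Hamming weight of x (the number of coordinates equal to 1), and define the 2^n × (n+1) matrix Q by Q(x, c) = 1/√(binom(n, c)) if f(x) = c and 0 otherwise, where binom(n,c) is the binomial coefficient. Then Qᵀ H_n Q = K_{n+1}, the (n+1)×(n+1) matrix indexed by {0,…,n} with (K_{n+1})(j, j+1) = (K_{n+1})(j+1, j) = √((j+1)(n−j)) for 0 ≤ j ≤ n−1 and all other entries 0. -/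

import Mathlib

open Matrix

/-- Adjacency matrix of the `n`-dimensional hypercube: vertices are `x : Fin n → ZMod 2`,
adjacent iff they differ in exactly one coordinate. -/
def cubeMatrix (n : ℕ) : Matrix (Fin n → ZMod 2) (Fin n → ZMod 2) ℝ :=
  Matrix.of fun x y =>
    if (Finset.univ.filter fun j => x j ≠ y j).card = 1 then 1 else 0

/-- The normalized partition matrix of the Hamming-weight equitable partition of the
hypercube: `Q(x, c) = 1/√(binom(n,c))` if the Hamming weight of `x` is `c`, else `0`. -/
noncomputable def hammingPartitionMatrix (n : ℕ) :
    Matrix (Fin n → ZMod 2) (Fin (n + 1)) ℝ :=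
  Matrix.of fun x c =>
    if (Finset.univ.filter fun j => x j = 1).card = (c : ℕ) then
      1 / Real.sqrt (n.choose (c : ℕ)) else 0

/-- The Kac matrix: adjacency matrix of the hypercubically weighted path graph `P̃_n`. -/
noncomputable def kacMatrix (n : ℕ) : Matrix (Fin n) (Fin n) ℝ :=
  Matrix.of fun i j =>
    if (i : ℕ) + 1 = (j : ℕ) then
      Real.sqrt ((((i : ℕ) : ℝ) + 1) * ((n : ℝ) - 1 - ((i : ℕ) : ℝ)))
    else if (j : ℕ) + 1 = (i : ℕ) then
      Real.sqrt ((((j : ℕ) : ℝ) + 1) * ((n : ℝ) - 1 - ((j : ℕ) : ℝ)))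
    else 0


def wt {n : ℕ} (x : Fin n → ZMod 2) : ℕ := (Finset.univ.filter fun j => x j = 1).card

lemma wt_le {n : ℕ} (x : Fin n → ZMod 2) : wt x ≤ n := by
  simpa [wt] using (Finset.card_filter_le Finset.univ fun j => x j = 1)

lemma zmod2_cases (a : ZMod 2) : a = 0 ∨ a = 1 := by revert a; decide

lemma card_wt_eq (n c : ℕ) :
    (Finset.univ.filter fun x : Fin n → ZMod 2 => wt x = c).card = n.choose c := by
  have key : ∀ s : Finset (Fin n),
      (Finset.univ.filter fun j => (fun j => if j ∈ s then (1 : ZMod 2) else 0) j = 1) = s := by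
    intro s; ext j; simp
  have : (Finset.univ.filter fun x : Fin n → ZMod 2 => wt x = c).card
      = (Finset.univ.filter fun s : Finset (Fin n) => s.card = c).card := by
    apply Finset.card_bij (fun x _ => Finset.univ.filter fun j => x j = 1)
    · intro x hx
      simp only [Finset.mem_filter, Finset.mem_univ, true_and] at hx ⊢
      exact hx
    · intro a _ b _ h
      funext j
      have : (a j = 1) = (b j = 1) := by
        have := Finset.ext_iff.mp h j
        simpa using propext this
      rcases zmod2_cases (a j) with h0 | h1 <;> rcases zmod2_cases (b j) with g0 | g1 <;>
        simp_all
    · intro s hs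
      refine ⟨fun j => if j ∈ s then 1 else 0, ?_, key s⟩
      simp only [Finset.mem_filter, Finset.mem_univ, true_and] at hs ⊢
      rw [wt, key s]; exact hs
  rw [this]
  have : (Finset.univ.filter fun s : Finset (Fin n) => s.card = c)
      = Finset.powersetCard c Finset.univ := by
    ext s; simp [Finset.mem_powersetCard]
  rw [this, Finset.card_powersetCard, Finset.card_fin]

def cflip {n : ℕ} (x : Fin n → ZMod 2) (j : Fin n) : Fin n → ZMod 2 :=
  Function.update x j (x j + 1)

lemma add_one_ne (a : ZMod 2) : a + 1 ≠ a := by revert a; decide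

lemma diff_flip {n : ℕ} (x : Fin n → ZMod 2) (j : Fin n) :
    (Finset.univ.filter fun j' => x j' ≠ cflip x j j') = {j} := by
  ext j'
  by_cases h : j' = j <;> simp [cflip, h, Function.update, (add_one_ne (x j)).symm]

lemma flip_image {n : ℕ} (x : Fin n → ZMod 2) :
    Finset.univ.image (cflip x)
      = Finset.univ.filter fun y => (Finset.univ.filter fun j => x j ≠ y j).card = 1 := by
  ext y
  simp only [Finset.mem_image, Finset.mem_univ, true_and, Finset.mem_filter]
  constructor
  · rintro ⟨j, rfl⟩
    rw [diff_flip]; simp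
  · intro hy
    obtain ⟨j, hj⟩ := Finset.card_eq_one.mp hy
    refine ⟨j, ?_⟩
    funext j'
    by_cases h : j' = j
    · subst h
      have hne : x j' ≠ y j' := by
        have : j' ∈ ({j'} : Finset (Fin n)) := by simp
        rw [← hj] at this; simpa using this
      rcases zmod2_cases (x j') with h0 | h1 <;> rcases zmod2_cases (y j') with g0 | g1 <;>
        simp_all [cflip, Function.update]; decide
    · have heq : x j' = y j' := by
        by_contra hne
        have : j' ∈ ({j} : Finset (Fin n)) := by rw [← hj]; simpa using hne
        simp at this; exact h this
      simp [cflip, Function.update, h, ← heq]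

lemma wt_flip_one {n : ℕ} (x : Fin n → ZMod 2) (j : Fin n) (h : x j = 1) :
    wt (cflip x j) = wt x - 1 := by
  have : (Finset.univ.filter fun j' => cflip x j j' = 1)
      = (Finset.univ.filter fun j' => x j' = 1).erase j := by
    ext j'
    by_cases hj : j' = j
    · subst hj; simp [cflip, Function.update, h]
    · simp [cflip, Function.update, hj]
  rw [wt, this, Finset.card_erase_of_mem (by simp [h])]; rfl

lemma wt_flip_zero {n : ℕ} (x : Fin n → ZMod 2) (j : Fin n) (h : x j ≠ 1) :
    wt (cflip x j) = wt x + 1 := by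
  have h0 : x j = 0 := by rcases zmod2_cases (x j) with h0 | h1; exact h0; exact absurd h1 h
  have : (Finset.univ.filter fun j' => cflip x j j' = 1)
      = insert j (Finset.univ.filter fun j' => x j' = 1) := by
    ext j'
    by_cases hj : j' = j
    · subst hj; simp [cflip, Function.update, h0]
    · simp [cflip, Function.update, hj]
  rw [wt, this, Finset.card_insert_of_notMem (by simp [h])]; rfl

lemma sqrt_helper (p q r s : ℕ) (hq : 0 < q) (hs : 0 < s) (h : p * p * s = r * q) :
    (p : ℝ) / Real.sqrt q = Real.sqrt r / Real.sqrt s := by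
  have h1 : (p : ℝ) / Real.sqrt q = Real.sqrt ((p * p : ℕ) / (q : ℝ)) := by
    rw [Real.sqrt_div (by positivity)]
    congr 1
    push_cast
    exact (Real.sqrt_mul_self (by positivity)).symm
  have h2 : Real.sqrt (r : ℝ) / Real.sqrt s = Real.sqrt ((r : ℝ) / s) := by
    rw [Real.sqrt_div (by positivity)]
  rw [h1, h2]
  congr 1
  rw [div_eq_div_iff (by positivity) (by positivity)]
  exact_mod_cast h


lemma QtQ (n : ℕ) :
    (hammingPartitionMatrix n)ᵀ * hammingPartitionMatrix n = 1 := by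
  ext a b
  simp only [Matrix.mul_apply, Matrix.transpose_apply, hammingPartitionMatrix, Matrix.of_apply,
    Matrix.one_apply]
  have hrw : ∀ x : Fin n → ZMod 2,
      (if (Finset.univ.filter fun j => x j = 1).card = (a : ℕ) then
          1 / Real.sqrt (n.choose (a : ℕ)) else 0) *
        (if (Finset.univ.filter fun j => x j = 1).card = (b : ℕ) then
          1 / Real.sqrt (n.choose (b : ℕ)) else 0)
      = if wt x = (a : ℕ) ∧ wt x = (b : ℕ) then
          1 / Real.sqrt (n.choose (a : ℕ)) * (1 / Real.sqrt (n.choose (b : ℕ))) else 0 := by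
    intro x
    by_cases h1 : wt x = (a : ℕ) <;> by_cases h2 : wt x = (b : ℕ) <;>
      simp [wt] at h1 h2 ⊢ <;> simp [h1, h2]
  rw [Finset.sum_congr rfl fun x _ => hrw x]
  by_cases hab : a = b
  · subst hab
    simp only [and_self, if_pos rfl]
    rw [Finset.sum_ite, Finset.sum_const_zero, add_zero, Finset.sum_const, card_wt_eq]
    have ha : (a : ℕ) ≤ n := Nat.lt_succ_iff.mp a.isLt
    have hpos : 0 < n.choose (a : ℕ) := Nat.choose_pos ha
    rw [nsmul_eq_mul]
    rw [one_div_mul_one_div, Real.mul_self_sqrt (by positivity)]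
    field_simp
    simp
  · have : ∀ x : Fin n → ZMod 2, ¬ (wt x = (a : ℕ) ∧ wt x = (b : ℕ)) := by
      rintro x ⟨h1, h2⟩
      exact hab (Fin.ext (h1 ▸ h2))
    simp [this, hab]

lemma cflip_inj {n : ℕ} (x : Fin n → ZMod 2) : Function.Injective (cflip x) := by
  intro j j' h
  have := diff_flip x j
  rw [h, diff_flip x j'] at this
  have := Finset.singleton_injective this
  exact this.symm

lemma HQ (n : ℕ) :
    cubeMatrix n * hammingPartitionMatrix n
      = hammingPartitionMatrix n * kacMatrix (n + 1) := by
  ext x c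
  have ha : wt x ≤ n := wt_le x
  have hc : (c : ℕ) ≤ n := Nat.lt_succ_iff.mp c.isLt
  -- LHS as sum over flips
  have lhs_eq : (cubeMatrix n * hammingPartitionMatrix n) x c
      = ∑ j : Fin n, (hammingPartitionMatrix n) (cflip x j) c := by
    rw [Matrix.mul_apply]
    have : ∀ y, cubeMatrix n x y * hammingPartitionMatrix n y c
        = if (Finset.univ.filter fun j => x j ≠ y j).card = 1 then
            hammingPartitionMatrix n y c else 0 := by
      intro y; rw [cubeMatrix, Matrix.of_apply]; split_ifs <;> simp
    rw [Finset.sum_congr rfl fun y _ => this y, ← Finset.sum_filter, ← flip_image,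
      Finset.sum_image (fun j _ j' _ h => cflip_inj x h)]
  -- split the sum
  have s1 : ∑ j ∈ Finset.univ.filter (fun j => x j = 1),
        (hammingPartitionMatrix n) (cflip x j) c
      = (wt x : ℝ) * (if wt x - 1 = (c : ℕ) then 1 / Real.sqrt (n.choose (c : ℕ)) else 0) := by
    have hterm : ∀ j ∈ Finset.univ.filter (fun j : Fin n => x j = 1),
        (hammingPartitionMatrix n) (cflip x j) c
          = if wt x - 1 = (c : ℕ) then 1 / Real.sqrt (n.choose (c : ℕ)) else 0 := by
      intro j hj
      simp only [Finset.mem_filter] at hj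
      simp only [hammingPartitionMatrix, Matrix.of_apply]
      rw [show (Finset.univ.filter fun j' => cflip x j j' = 1).card = wt x - 1 from
        wt_flip_one x j hj.2]
    rw [Finset.sum_congr rfl hterm, Finset.sum_const, nsmul_eq_mul]
    rfl
  have s2 : ∑ j ∈ Finset.univ.filter (fun j => ¬ x j = 1),
        (hammingPartitionMatrix n) (cflip x j) c
      = ((n - wt x : ℕ) : ℝ) *
          (if wt x + 1 = (c : ℕ) then 1 / Real.sqrt (n.choose (c : ℕ)) else 0) := by
    have hterm : ∀ j ∈ Finset.univ.filter (fun j : Fin n => ¬ x j = 1),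
        (hammingPartitionMatrix n) (cflip x j) c
          = if wt x + 1 = (c : ℕ) then 1 / Real.sqrt (n.choose (c : ℕ)) else 0 := by
      intro j hj
      simp only [Finset.mem_filter] at hj
      simp only [hammingPartitionMatrix, Matrix.of_apply]
      rw [show (Finset.univ.filter fun j' => cflip x j j' = 1).card = wt x + 1 from
        wt_flip_zero x j hj.2]
    rw [Finset.sum_congr rfl hterm, Finset.sum_const, nsmul_eq_mul]
    congr 2
    have h := Finset.card_filter_add_card_filter_not
      (s := Finset.univ) (p := fun j : Fin n => x j = 1)
    simp only [Finset.card_univ, Fintype.card_fin] at h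
    have : wt x = (Finset.univ.filter fun j : Fin n => x j = 1).card := rfl
    omega
  -- RHS
  have rhs_eq : (hammingPartitionMatrix n * kacMatrix (n + 1)) x c
      = (1 / Real.sqrt (n.choose (wt x))) *
          kacMatrix (n + 1) ⟨wt x, Nat.lt_succ_of_le ha⟩ c := by
    rw [Matrix.mul_apply]
    rw [Finset.sum_eq_single ⟨wt x, Nat.lt_succ_of_le ha⟩]
    · simp [hammingPartitionMatrix, wt]
    · intro d _ hd
      have : wt x ≠ (d : ℕ) := fun h => hd (Fin.ext (by simp [← h]))
      simp [hammingPartitionMatrix, wt] at this ⊢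
      intro h; exact absurd h this
    · simp
  rw [lhs_eq, ← Finset.sum_filter_add_sum_filter_not Finset.univ (fun j => x j = 1), s1, s2,
    rhs_eq]
  set a := wt x with ha_def
  simp only [kacMatrix, Matrix.of_apply]
  by_cases h1 : a + 1 = (c : ℕ)
  · -- c = a + 1
    rw [if_neg (by omega), mul_zero, zero_add, if_pos h1, if_pos h1, mul_one_div]
    have key : ((n - a : ℕ) : ℝ) / Real.sqrt (n.choose (c : ℕ))
        = Real.sqrt (((a + 1) * (n - a) : ℕ)) / Real.sqrt (n.choose a) := by
      apply sqrt_helper _ _ _ _ (Nat.choose_pos hc) (Nat.choose_pos ha)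
      rw [← h1]
      have h2 := Nat.choose_succ_right_eq n a
      calc (n - a) * (n - a) * n.choose a
          = (n - a) * (n.choose a * (n - a)) := by ring
        _ = (n - a) * (n.choose (a + 1) * (a + 1)) := by rw [h2]
        _ = (a + 1) * (n - a) * n.choose (a + 1) := by ring
    rw [key]
    rw [one_div_mul_eq_div]
    congr 1
    rw [Nat.cast_mul, Nat.cast_sub ha]
    push_cast
    ring_nf
    rw [← ha_def]
    ring_nf
  · by_cases h2 : (c : ℕ) + 1 = a
    · -- c = a - 1
      rw [if_pos (by omega), if_neg h1, mul_zero, add_zero, if_neg h1, if_pos h2, mul_one_div]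
      have key : ((a : ℕ) : ℝ) / Real.sqrt (n.choose (c : ℕ))
          = Real.sqrt ((((c : ℕ) + 1) * (n - (c : ℕ)) : ℕ)) / Real.sqrt (n.choose a) := by
        apply sqrt_helper _ _ _ _ (Nat.choose_pos hc) (Nat.choose_pos ha)
        have h3 := Nat.choose_succ_right_eq n (c : ℕ)
        calc a * a * n.choose a
            = a * (n.choose a * a) := by ring
          _ = a * (n.choose ((c : ℕ) + 1) * ((c : ℕ) + 1)) := by rw [h2]
          _ = a * (n.choose (c : ℕ) * (n - (c : ℕ))) := by rw [h3]
          _ = ((c : ℕ) + 1) * (n - (c : ℕ)) * n.choose (c : ℕ) := by rw [← h2]; ring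
      rw [key, one_div_mul_eq_div]
      congr 1
      rw [Nat.cast_mul, Nat.cast_sub hc]
      push_cast
      ring_nf
    · -- far apart: everything zero
      rw [if_neg h1, if_neg h1, if_neg h2, mul_zero, mul_zero, add_zero]
      rcases Nat.eq_zero_or_pos a with h0 | h0
      · have hz : ((a : ℕ) : ℝ) = 0 := by exact_mod_cast h0
        rw [hz, zero_mul]
      · rw [if_neg (by omega), mul_zero]

/-- the quotient of the hypercube under the Hamming-weight equitable
partition is the hypercubically weighted path: `Qᵀ H_n Q = K_{n+1}`. -/
theorem stmt12 (n : ℕ) (hn : 1 ≤ n) :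
    (hammingPartitionMatrix n)ᵀ * cubeMatrix n * hammingPartitionMatrix n =
      kacMatrix (n + 1) := by
  rw [Matrix.mul_assoc, HQ n, ← Matrix.mul_assoc, QtQ n, one_mul]
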